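/- Reduction correctness for the safety unfolding (mean-payoff): for any infinite weight sequence w : ℕ → ℤ with |w(k)| ≤ W, define the 'tracker' sequence (l_n, z_n) by (l_0, z_0) = (0,0) and (l_{n+1}, z_{n+1}) = (0,0) if z_n + w(n) ≥ 0 or (l_n = λ and z_n < 0), and (l_n + 1, z_n + w(n)) otherwise. Then w satisfies DFW_mp(λ) if and only if the tracker never reaches a state with l = λ and z < 0. -/

import Mathlib

/-- Correctness of the safety unfolding for direct fixed window mean-payoff:
the tracker `(l, z)` (window age and running sum, reset upon closure or upon
staying open `λ` steps) never reaches a state with `l = λ` and `z < 0` iff the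
weight sequence satisfies `DFW_mp(λ)`. -/
theorem tracker_mp_correct (w : ℕ → ℤ) (W : ℕ) (hW : ∀ k, |w k| ≤ (W : ℤ))
    (lam : ℕ) (hlam : 1 ≤ lam)
    (l : ℕ → ℕ) (z : ℕ → ℤ) (h0 : l 0 = 0 ∧ z 0 = 0)
    (hreset : ∀ n, (0 ≤ z n + w n ∨ (l n = lam ∧ z n < 0)) →
      l (n + 1) = 0 ∧ z (n + 1) = 0)
    (hstep : ∀ n, ¬(0 ≤ z n + w n ∨ (l n = lam ∧ z n < 0)) →
      l (n + 1) = l n + 1 ∧ z (n + 1) = z n + w n) :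
    (∀ j, ∃ t, t < lam ∧ 0 ≤ ∑ k ∈ Finset.Icc j (j + t), w k) ↔
      ∀ n, ¬(l n = lam ∧ z n < 0) := by
  obtain ⟨hl0, hz0⟩ := h0
  -- Key invariant of the tracker.
  have key : ∀ n, l n ≤ lam ∧ l n ≤ n ∧
      z n = ∑ k ∈ Finset.Ico (n - l n) n, w k ∧
      ∀ t, t < l n → ∑ k ∈ Finset.Ico (n - l n) (n - l n + t + 1), w k < 0 := by
    intro n
    induction n with
    | zero =>
      refine ⟨by omega, by omega, ?_, ?_⟩
      · simp [hz0, hl0]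
      · intro t ht
        exact absurd ht (by omega)
    | succ n ih =>
      obtain ⟨h1, h2, h3, h4⟩ := ih
      by_cases hc : 0 ≤ z n + w n ∨ (l n = lam ∧ z n < 0)
      · obtain ⟨hl, hz⟩ := hreset n hc
        refine ⟨by omega, by omega, ?_, ?_⟩
        · rw [hz, hl]; simp
        · intro t ht
          exact absurd ht (by omega)
      · obtain ⟨hl, hz⟩ := hstep n hc
        push_neg at hc
        obtain ⟨hc1, hc2⟩ := hc
        have hlt : l n < lam := by
          rcases Nat.lt_or_ge (l n) lam with h | h
          · exact h
          · have hle : l n = lam := le_antisymm h1 h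
            have hpos : 0 < l n := by omega
            have h5 := h4 (l n - 1) (by omega)
            have heq : n - l n + (l n - 1) + 1 = n := by omega
            rw [heq, ← h3] at h5
            linarith [hc2 hle]
        have hs : (n + 1) - l (n + 1) = n - l n := by omega
        refine ⟨by omega, by omega, ?_, ?_⟩
        · rw [hz, hs, h3]
          rw [Finset.sum_Ico_succ_top (by omega : n - l n ≤ n)]
        · intro t ht
          rw [hl] at ht
          rw [hs]
          rcases Nat.lt_or_ge t (l n) with h | h
          · exact h4 t h
          · have hteq : t = l n := by omega
            subst hteq
            have heq : n - l n + l n + 1 = n + 1 := by omega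
            rw [heq]
            rw [Finset.sum_Ico_succ_top (by omega : n - l n ≤ n), ← h3]
            linarith
  constructor
  · -- DFW implies safety
    intro hdfw n
    rintro ⟨hln, hzn⟩
    obtain ⟨h1, h2, h3, h4⟩ := key n
    obtain ⟨t, htl, hts⟩ := hdfw (n - l n)
    have h5 := h4 t (by omega)
    rw [Finset.Ico_add_one_right_eq_Icc] at h5
    linarith
  · -- safety implies DFW
    intro hsafe j
    have hlt : ∀ n, l n < lam := by
      intro n
      obtain ⟨h1, h2, h3, h4⟩ := key n
      rcases Nat.lt_or_ge (l n) lam with h | h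
      · exact h
      · have hle : l n = lam := le_antisymm h1 h
        have hpos : 0 < l n := by omega
        have h5 := h4 (l n - 1) (by omega)
        have heq : n - l n + (l n - 1) + 1 = n := by omega
        rw [heq, ← h3] at h5
        exact absurd ⟨hle, h5⟩ (hsafe n)
    have hgrow : ∀ i, (∀ i', i' < i → ¬ 0 ≤ z (j + i') + w (j + i')) →
        l (j + i) = l j + i := by
      intro i
      induction i with
      | zero => intro _; simp
      | succ i ih =>
        intro h
        have hi := ih (fun i' hi' => h i' (by omega))
        have hnr : ¬(0 ≤ z (j + i) + w (j + i) ∨ (l (j + i) = lam ∧ z (j + i) < 0)) := by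
          rintro (hx | ⟨ha, hb⟩)
          · exact h i (by omega) hx
          · exact hsafe (j + i) ⟨ha, hb⟩
        obtain ⟨hl', _⟩ := hstep (j + i) hnr
        have : j + (i + 1) = (j + i) + 1 := by omega
        rw [this, hl', hi]
        omega
    have hex : ∃ i, i < lam ∧ 0 ≤ z (j + i) + w (j + i) := by
      by_contra hno
      push_neg at hno
      have hg := hgrow lam (fun i' hi' => by
        have := hno i' hi'
        intro hcontra
        linarith)
      have := hlt (j + lam)
      omega
    have hex2 : ∃ i, 0 ≤ z (j + i) + w (j + i) := ⟨hex.choose, hex.choose_spec.2⟩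
    set i0 := Nat.find hex2 with hi0def
    have hmin : ∀ i', i' < i0 → ¬ 0 ≤ z (j + i') + w (j + i') :=
      fun i' h => Nat.find_min hex2 h
    have hi0lam : i0 < lam := by
      obtain ⟨i, hil, hiz⟩ := hex
      exact lt_of_le_of_lt (Nat.find_min' hex2 hiz) hil
    have hspec : 0 ≤ z (j + i0) + w (j + i0) := Nat.find_spec hex2
    have hlm := hgrow i0 hmin
    set m := j + i0 with hm
    obtain ⟨k1, k2, k3, k4⟩ := key m
    have hsj : l j ≤ j := (key j).2.1
    have hsm : m - l m = j - l j := by omega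
    have hsum1 : z m = ∑ k ∈ Finset.Ico (j - l j) m, w k := by rw [k3, hsm]
    have htot : (0:ℤ) ≤ ∑ k ∈ Finset.Ico (j - l j) (m + 1), w k := by
      rw [Finset.sum_Ico_succ_top (by omega : j - l j ≤ m), ← hsum1]
      exact hspec
    have hpre : ∑ k ∈ Finset.Ico (j - l j) j, w k ≤ 0 := by
      rcases Nat.eq_zero_or_pos (l j) with h | h
      · have hjj : j - l j = j := by omega
        rw [hjj]; simp
      · have h5 := k4 (l j - 1) (by omega)
        rw [hsm] at h5
        have heq : j - l j + (l j - 1) + 1 = j := by omega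
        rw [heq] at h5
        linarith
    have hsplit := Finset.sum_Ico_consecutive w (by omega : j - l j ≤ j)
      (by omega : j ≤ m + 1)
    refine ⟨i0, hi0lam, ?_⟩
    rw [← Finset.Ico_add_one_right_eq_Icc]
    have : (0:ℤ) ≤ ∑ k ∈ Finset.Ico j (m + 1), w k := by linarith
    convert this using 3
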